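/- The vectors H([1:1]), ..., H([1:n-1]) together with 2e_{i,j} for 1 ≤ i < j < n form a Z-basis of the additive subgroup (lattice) of Z^(n choose 2) generated by the image of H, i.e., every H(I) for I ⊆ {1,...,n} is an integer linear combination of these vectors, these vectors lie in that subgroup, and they are linearly independent. -/

import Mathlib

/-- Coordinates of `ℤ^(n choose 2)`: unordered pairs of vertices of `K_n`,
represented as ordered pairs `(a, b)` with `a < b` (0-indexed). -/
def PairIdx (n : ℕ) := {p : Fin n × Fin n // p.1 < p.2}

instance (n : ℕ) : Fintype (PairIdx n) := by unfold PairIdx; infer_instance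
instance (n : ℕ) : DecidableEq (PairIdx n) := by unfold PairIdx; infer_instance

/-- The overlapping map `H`: the `{a,b}`-entry of `HvecZ I` is `1` iff exactly one of
`a`, `b` lies in `I`. -/
def HvecZ {n : ℕ} (I : Finset (Fin n)) : PairIdx n → ℤ :=
  fun p => if ((p.val.1 ∈ I) ↔ (p.val.2 ∈ I)) then 0 else 1

/-- The proposed basis: `H([1:1]), …, H([1:n-1])` (0-indexed: `H({0,…,k})` for
`k = 0, …, n-2`) together with `2·e_{i,j}` for pairs `{i,j}` with `i < j < n`
(0-indexed: pairs not containing the last vertex). -/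
def latFam (n : ℕ) :
    (Fin (n - 1) ⊕ {p : PairIdx n // p.val.2.val < n - 1}) → (PairIdx n → ℤ)
  | Sum.inl k => HvecZ (Finset.univ.filter fun x : Fin n => x.val ≤ k.val)
  | Sum.inr q => fun p => if p = q.val then 2 else 0

lemma latFam_inl_apply {n : ℕ} (k : Fin (n-1)) (p : PairIdx n) :
    latFam n (Sum.inl k) p = if p.val.1.val ≤ k.val ∧ k.val < p.val.2.val then 1 else 0 := by
  have hp : p.val.1 < p.val.2 := p.property
  have h12 : p.val.1.val < p.val.2.val := hp
  simp only [latFam, HvecZ, Finset.mem_filter, Finset.mem_univ, true_and]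
  by_cases h1 : p.val.1.val ≤ k.val <;> by_cases h2 : p.val.2.val ≤ k.val <;>
    simp [h1, h2] <;> omega

/-- extend coefficients on `Fin (n-1)` to `ℕ` by zero -/
def cext {n : ℕ} (c : Fin (n-1) → ℤ) (j : ℕ) : ℤ :=
  if h : j < n-1 then c ⟨j, h⟩ else 0

lemma sum_inl_apply {n : ℕ} (c : Fin (n-1) → ℤ) (p : PairIdx n) :
    (∑ k, c k • latFam n (Sum.inl k)) p
      = ∑ j ∈ Finset.Ico p.val.1.val p.val.2.val, cext c j := by
  have hb : p.val.2.val ≤ n - 1 := by omega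
  rw [Finset.sum_apply]
  simp only [Pi.smul_apply, latFam_inl_apply, smul_eq_mul]
  have : ∀ k : Fin (n-1), c k * (if p.val.1.val ≤ k.val ∧ k.val < p.val.2.val then 1 else 0)
      = (fun j => cext c j * (if p.val.1.val ≤ j ∧ j < p.val.2.val then 1 else 0)) k.val := by
    intro k
    simp [cext]
  rw [Finset.sum_congr rfl (fun k _ => this k), Fin.sum_univ_eq_sum_range
      (fun j => cext c j * (if p.val.1.val ≤ j ∧ j < p.val.2.val then 1 else 0))]
  rw [show Finset.Ico p.val.1.val p.val.2.val
      = (Finset.range (n-1)).filter (fun j => p.val.1.val ≤ j ∧ j < p.val.2.val) from ?_]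
  · rw [Finset.sum_filter]
    apply Finset.sum_congr rfl
    intro j _
    split <;> simp
  · ext j
    simp only [Finset.mem_Ico, Finset.mem_filter, Finset.mem_range]
    omega

lemma sum_inr_apply {n : ℕ} (d : {p : PairIdx n // p.val.2.val < n - 1} → ℤ) (p : PairIdx n) :
    (∑ q, d q • latFam n (Sum.inr q)) p
      = if h : p.val.2.val < n-1 then 2 * d ⟨p, h⟩ else 0 := by
  rw [Finset.sum_apply]
  split
  · next h =>
    rw [Finset.sum_eq_single (⟨p, h⟩ : {p : PairIdx n // p.val.2.val < n - 1})]
    · simp [latFam]; ring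
    · intro q _ hq
      have : p ≠ q.val := fun he => hq (Subtype.ext he.symm)
      simp [latFam, this]
    · simp
  · next h =>
    apply Finset.sum_eq_zero
    intro q _
    have : p ≠ q.val := fun he => h (he ▸ q.property)
    simp [latFam, this]

lemma telescope (f : ℕ → ℤ) (a b : ℕ) (h : a ≤ b) :
    ∑ j ∈ Finset.Ico a b, (f j - f (j+1)) = f a - f b := by
  induction b, h using Nat.le_induction with
  | base => simp
  | succ b hb ih => rw [Finset.sum_Ico_succ_top hb, ih]; ring

lemma two_e_eq {n : ℕ} (q : {p : PairIdx n // p.val.2.val < n - 1}) :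
    latFam n (Sum.inr q)
      = HvecZ {q.val.val.1} + HvecZ {q.val.val.2}
        - HvecZ {q.val.val.1, q.val.val.2} := by
  funext p
  have hq : q.val.val.1 < q.val.val.2 := q.val.property
  have hp : p.val.1 < p.val.2 := p.property
  have hpe : (p = q.val) ↔ (p.val.1 = q.val.val.1 ∧ p.val.2 = q.val.val.2) := by
    exact Subtype.ext_iff.trans Prod.ext_iff
  simp only [latFam, HvecZ, Finset.mem_singleton, Finset.mem_insert, Pi.add_apply,
    Pi.sub_apply, hpe]
  by_cases h1 : p.val.1 = q.val.val.1 <;> by_cases h2 : p.val.1 = q.val.val.2 <;>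
    by_cases h3 : p.val.2 = q.val.val.1 <;> by_cases h4 : p.val.2 = q.val.val.2 <;>
    simp [h1, h2, h3, h4] <;> omega

lemma HvecZ_compl {n : ℕ} (I : Finset (Fin n)) : HvecZ Iᶜ = HvecZ I := by
  funext p
  simp only [HvecZ, Finset.mem_compl]
  by_cases h1 : p.val.1 ∈ I <;> by_cases h2 : p.val.2 ∈ I <;> simp [h1, h2]

lemma hv_mem {n : ℕ} (hn : 3 ≤ n) (I : Finset (Fin n))
    (hI : (⟨n-1, by omega⟩ : Fin n) ∉ I) :
    HvecZ I ∈ Submodule.span ℤ (Set.range (latFam n)) := by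
  set f : ℕ → ℤ := fun a => if h : a < n then (if (⟨a, h⟩ : Fin n) ∈ I then 1 else 0) else 0
    with hf
  set c : Fin (n-1) → ℤ := fun k => f k.val - f (k.val + 1) with hc
  set d : {p : PairIdx n // p.val.2.val < n - 1} → ℤ :=
    fun q => if q.val.val.1 ∉ I ∧ q.val.val.2 ∈ I then 1 else 0 with hd
  have key : HvecZ I
      = (∑ k, c k • latFam n (Sum.inl k)) + (∑ q, d q • latFam n (Sum.inr q)) := by
    funext p
    rw [Pi.add_apply, sum_inl_apply, sum_inr_apply]
    have hab : p.val.1.val < p.val.2.val := p.property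
    have hbn : p.val.2.val < n := p.val.2.isLt
    have hIco : ∑ j ∈ Finset.Ico p.val.1.val p.val.2.val, cext c j
        = f p.val.1.val - f p.val.2.val := by
      rw [← telescope f _ _ (le_of_lt hab)]
      refine Finset.sum_congr rfl fun j hj => ?_
      rw [Finset.mem_Ico] at hj
      have hj' : j < n - 1 := by omega
      simp [cext, hj', hc]
    rw [hIco]
    have hfa : f p.val.1.val = (if p.val.1 ∈ I then 1 else 0) := by
      simp [hf, p.val.1.isLt]
    have hfb : f p.val.2.val = (if p.val.2 ∈ I then 1 else 0) := by
      simp [hf, hbn]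
    rw [hfa, hfb]
    by_cases hb : p.val.2.val < n - 1
    · simp only [hb, dif_pos]
      simp only [hd, HvecZ]
      by_cases h1 : p.val.1 ∈ I <;> by_cases h2 : p.val.2 ∈ I <;> simp [h1, h2]
    · have hblast : p.val.2 = (⟨n-1, by omega⟩ : Fin n) := by
        apply Fin.ext; simp; omega
      have h2 : p.val.2 ∉ I := hblast ▸ hI
      simp only [hb, dif_neg, not_false_iff, HvecZ]
      by_cases h1 : p.val.1 ∈ I <;> simp [h1, h2]
  rw [key]
  refine add_mem (Submodule.sum_mem _ fun k _ => Submodule.smul_mem _ _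
      (Submodule.subset_span ⟨Sum.inl k, rfl⟩))
    (Submodule.sum_mem _ fun q _ => Submodule.smul_mem _ _
      (Submodule.subset_span ⟨Sum.inr q, rfl⟩))

lemma latFam_li (n : ℕ) (hn : 3 ≤ n) : LinearIndependent ℤ (latFam n) := by
  rw [Fintype.linearIndependent_iff]
  intro g hg
  set c : Fin (n-1) → ℤ := fun k => g (Sum.inl k) with hcdef
  have hsum : (∑ k, c k • latFam n (Sum.inl k))
      + (∑ q, g (Sum.inr q) • latFam n (Sum.inr q)) = 0 := by
    rw [← hg, Fintype.sum_sum_type]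
  have hT : ∀ a : ℕ, a < n - 1 → ∑ j ∈ Finset.Ico a (n-1), cext c j = 0 := by
    intro a ha
    have hpa : ((⟨a, by omega⟩ : Fin n), (⟨n-1, by omega⟩ : Fin n)).1
        < ((⟨a, by omega⟩ : Fin n), (⟨n-1, by omega⟩ : Fin n)).2 := by
      simp [Fin.lt_def]; omega
    set pa : PairIdx n := ⟨(⟨a, by omega⟩, ⟨n-1, by omega⟩), hpa⟩ with hpadef
    have := congrFun hsum pa
    rw [Pi.add_apply, sum_inl_apply, sum_inr_apply] at this
    simp only [hpadef, Pi.zero_apply] at this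
    rw [dif_neg (by simp)] at this
    simpa using this
  have hc0 : ∀ k : Fin (n-1), c k = 0 := by
    intro k
    have hk : k.val < n - 1 := k.isLt
    have h1 : ∑ j ∈ Finset.Ico k.val (n-1), cext c j = 0 := hT k.val hk
    have h2 : ∑ j ∈ Finset.Ico (k.val+1) (n-1), cext c j = 0 := by
      rcases Nat.lt_or_ge (k.val+1) (n-1) with h | h
      · exact hT _ h
      · rw [Finset.Ico_eq_empty (by omega), Finset.sum_empty]
    rw [Finset.sum_eq_sum_Ico_succ_bot hk, h2, add_zero] at h1
    simpa [cext, hk] using h1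
  have hd0 : ∀ q : {p : PairIdx n // p.val.2.val < n - 1}, g (Sum.inr q) = 0 := by
    intro q
    have := congrFun hsum q.val
    rw [Pi.add_apply, sum_inl_apply, sum_inr_apply, dif_pos q.property] at this
    have hz : ∑ j ∈ Finset.Ico q.val.val.1.val q.val.val.2.val, cext c j = 0 := by
      apply Finset.sum_eq_zero
      intro j _
      simp only [cext]
      split
      · exact hc0 _
      · rfl
    rw [hz, Pi.zero_apply, zero_add] at this
    simp only [Subtype.coe_eta] at this
    omega
  intro i
  cases i with
  | inl k => exact hc0 k
  | inr q => exact hd0 q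

/-- The family `latFam n` is a `ℤ`-basis of the lattice generated by the image of `H`:
its members lie in the lattice, they generate every `H(I)`, and they are
linearly independent over `ℤ`. -/
theorem stmt5 (n : ℕ) (hn : 3 ≤ n) :
    (∀ k, latFam n k ∈ Submodule.span ℤ (Set.range (fun I : Finset (Fin n) => HvecZ I))) ∧
    (∀ I : Finset (Fin n),
      HvecZ I ∈ Submodule.span ℤ (Set.range (latFam n))) ∧
    LinearIndependent ℤ (latFam n) := by
  refine ⟨?_, ?_, latFam_li n hn⟩
  · intro k
    cases k with
    | inl k =>
      exact Submodule.subset_span ⟨_, rfl⟩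
    | inr q =>
      rw [two_e_eq]
      exact sub_mem (add_mem (Submodule.subset_span ⟨_, rfl⟩)
        (Submodule.subset_span ⟨_, rfl⟩)) (Submodule.subset_span ⟨_, rfl⟩)
  · intro I
    by_cases hlast : (⟨n-1, by omega⟩ : Fin n) ∈ I
    · rw [← HvecZ_compl]
      exact hv_mem hn Iᶜ (by simp [hlast])
    · exact hv_mem hn I hlast
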